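/- Let (U,τ) be a compact structure for L, i.e., a topological structure whose underlying set X carries a compact Hausdorff topology making all function-symbol interpretations continuous. Then every continuous function f : X → ℂ is almost periodic: C(X) ⊆ AP(U). -/

import Mathlib

open FirstOrder UniformFun
open scoped UniformConvergence Topology

/-- Fill the `j`-th coordinate with `a`, the others given by `x`. -/
def Fill {A : Type*} {n : ℕ} (j : Fin n) (x : {i : Fin n // i ≠ j} → A) (a : A) : Fin n → A :=
  fun i => if h : i = j then a else x ⟨i, h⟩

/-- A simple translation of the structure. -/
def IsSimpleTranslation (L : FirstOrder.Language) (A : Type*) [L.Structure A] (t : A → A) : Prop :=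
  ∃ (n : ℕ) (Φ : L.Functions n) (j : Fin n) (x : {i : Fin n // i ≠ j} → A),
    t = fun a => Language.Structure.funMap Φ (Fill j x a)

/-- The translation semigroup `S(U)`: finite compositions of simple translations. -/
inductive IsTranslation (L : FirstOrder.Language) (A : Type*) [L.Structure A] : (A → A) → Prop
  | simple {t : A → A} : IsSimpleTranslation L A t → IsTranslation L A t
  | comp {s t : A → A} : IsTranslation L A s → IsTranslation L A t → IsTranslation L A (s ∘ t)

/-- A bounded continuous `f : A → ℂ` is almost periodic if for every `n`-ary function symbol `Φ`,
every translation `t ∈ S(U)` and every coordinate `j`, the family of functions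
`x ↦ f (t (Φ (x₁, …, a, …, xₙ)))`, indexed by `a ∈ A`, is relatively compact in
`C_∞(A^{n-1})` (with the uniform convergence/supremum topology). -/
def IsAlmostPeriodic (L : FirstOrder.Language) (A : Type*) [TopologicalSpace A] [L.Structure A]
    (f : A → ℂ) : Prop :=
  Continuous f ∧ (∃ C, ∀ a, ‖f a‖ ≤ C) ∧
    ∀ (n : ℕ) (Φ : L.Functions n) (t : A → A), IsTranslation L A t →
      ∀ j : Fin n,
        IsCompact (closure {u : ({i : Fin n // i ≠ j} → A) →ᵤ ℂ |
          ∃ a : A, u = UniformFun.ofFun fun x => f (t (Language.Structure.funMap Φ (Fill j x a)))})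

theorem translation_continuous (L : FirstOrder.Language) (X : Type*)
    [TopologicalSpace X] [L.Structure X]
    (hX : ∀ (n : ℕ) (Φ : L.Functions n),
      Continuous fun x : Fin n → X => Language.Structure.funMap Φ x)
    {t : X → X} (ht : IsTranslation L X t) : Continuous t := by
  induction ht with
  | simple h =>
    obtain ⟨n, Φ, j, x, rfl⟩ := h
    exact (hX n Φ).comp (continuous_pi fun i => by
      unfold Fill; by_cases h : i = j <;> simp [h] <;> [exact continuous_id; exact continuous_const])
  | comp hs ht ihs iht => exact ihs.comp iht

set_option maxHeartbeats 1000000 in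
/-- **Proposition 2.2.** For a compact structure `(U,τ)` on `X` (compact Hausdorff topology making
all function-symbol interpretations continuous), every continuous `f : X → ℂ` is almost periodic:
`C(X) ⊆ AP(U)`. -/
theorem continuous_isAlmostPeriodic_of_compactSpace (L : FirstOrder.Language) (X : Type*)
    [TopologicalSpace X] [CompactSpace X] [T2Space X] [L.Structure X]
    (hX : ∀ (n : ℕ) (Φ : L.Functions n),
      Continuous fun x : Fin n → X => Language.Structure.funMap Φ x)
    (f : X → ℂ) (hf : Continuous f) :
    IsAlmostPeriodic L X f := by
  refine ⟨hf, ?_, ?_⟩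
  · obtain ⟨C, hC⟩ := IsCompact.exists_bound_of_continuousOn isCompact_univ hf.continuousOn
    exact ⟨C, fun a => hC a (Set.mem_univ a)⟩
  · intro n Φ t ht j
    letI : UniformSpace X := uniformSpaceOfCompactR1
    have htc : Continuous t := translation_continuous L X hX ht
    set g : X → ({i : Fin n // i ≠ j} → X) → ℂ :=
      fun a x => f (t (Language.Structure.funMap Φ (Fill j x a))) with hg
    have hgc : Continuous ↿g := by
      apply hf.comp; apply htc.comp; apply (hX n Φ).comp
      refine continuous_pi fun i => ?_
      unfold Fill
      by_cases h : i = j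
      · simpa [h] using continuous_fst
      · simp [h]; exact (continuous_apply _).comp continuous_snd
    have hF : Continuous (fun a : X => UniformFun.ofFun (g a)) := by
      rw [continuous_iff_continuousAt]
      intro a
      rw [ContinuousAt, UniformFun.tendsto_iff_tendstoUniformly]
      exact Continuous.tendstoUniformly g hgc a
    have hset : {u : ({i : Fin n // i ≠ j} → X) →ᵤ ℂ |
        ∃ a : X, u = UniformFun.ofFun fun x => f (t (Language.Structure.funMap Φ (Fill j x a)))}
        = Set.range (fun a : X => UniformFun.ofFun (g a)) := by
      ext u; simp [Set.mem_setOf_eq, Set.mem_range, eq_comm, hg]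
    rw [hset]
    have hcp : IsCompact (Set.range fun a : X => UniformFun.ofFun (g a)) :=
      isCompact_range hF
    rwa [hcp.isClosed.closure_eq]
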